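/- For every μ > 0 and every r ∈ ℤ with r + ⌊μ⌋ ≥ 0, the translated Stein–Chen solution satisfies Σ_{l ∈ ℤ} |ĝ_{μ,r}(l) − ĝ_{μ,r}(l−1)| ≤ 2/μ. -/

import Mathlib

noncomputable section

/-- The Stein–Chen solution `g_{μ,s}` for the one-point set `{s}`: the unique
function with `g 0 = 0` and `μ·g(j+1) − j·g(j) = 1[j=s] − e^{−μ} μ^s / s!`. -/
def steinChen (μ : ℝ) (s : ℕ) : ℕ → ℝ
  | 0 => 0
  | j + 1 => ((j : ℝ) * steinChen μ s j + (if j = s then 1 else 0)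
      - Real.exp (-μ) * μ ^ s / (Nat.factorial s : ℝ)) / μ

/-- The translated Stein–Chen solution `ĝ_{μ,r}`. -/
def ghat (μ : ℝ) (r : ℤ) (l : ℤ) : ℝ :=
  if l < -⌊μ⌋ then 0 else steinChen μ (r + ⌊μ⌋).toNat (l + ⌊μ⌋).toNat

namespace SteinAux

/-- Poisson pmf. -/
def P (μ : ℝ) (j : ℕ) : ℝ := Real.exp (-μ) * μ ^ j / (Nat.factorial j : ℝ)

lemma P_pos {μ : ℝ} (hμ : 0 < μ) (j : ℕ) : 0 < P μ j := by
  unfold P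
  positivity

lemma P_succ {μ : ℝ} (j : ℕ) : P μ (j + 1) = μ * P μ j / (j + 1) := by
  unfold P
  rw [Nat.factorial_succ]
  have h1 : ((j + 1 : ℕ) : ℝ) ≠ 0 := by positivity
  have h2 : ((Nat.factorial j : ℕ) : ℝ) ≠ 0 := by positivity
  push_cast
  field_simp
  ring

lemma summable_P (μ : ℝ) : Summable (P μ) := by
  have := (Real.summable_pow_div_factorial μ).mul_left (Real.exp (-μ))
  exact this.congr fun j => by unfold P; ring

lemma tsum_P {μ : ℝ} : ∑' j, P μ j = 1 := by
  have h : (∑' n : ℕ, μ ^ n / (Nat.factorial n : ℝ)) = Real.exp μ := by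
    rw [Real.exp_eq_exp_ℝ, NormedSpace.exp_eq_tsum_div]
  calc ∑' j, P μ j = ∑' j, Real.exp (-μ) * (μ ^ j / (Nat.factorial j : ℝ)) := by
        refine tsum_congr fun j => ?_; unfold P; ring
    _ = Real.exp (-μ) * Real.exp μ := by rw [tsum_mul_left, h]
    _ = 1 := by rw [← Real.exp_add]; simp

/-- Poisson cdf. -/
def F (μ : ℝ) (j : ℕ) : ℝ := ∑ i ∈ Finset.range (j + 1), P μ i

/-- Poisson tail. -/
def T (μ : ℝ) (j : ℕ) : ℝ := ∑' k, P μ (k + (j + 1))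

lemma F_succ {μ : ℝ} (j : ℕ) : F μ (j + 1) = F μ j + P μ (j + 1) :=
  Finset.sum_range_succ _ _

lemma F_nonneg {μ : ℝ} (hμ : 0 < μ) (j : ℕ) : 0 ≤ F μ j :=
  Finset.sum_nonneg fun i _ => (P_pos hμ i).le

lemma T_eq {μ : ℝ} (j : ℕ) : T μ j = 1 - F μ j := by
  have h := Summable.sum_add_tsum_nat_add (f := P μ) (j + 1) (summable_P μ)
  rw [tsum_P] at h
  unfold T F
  linarith

lemma T_nonneg {μ : ℝ} (hμ : 0 < μ) (j : ℕ) : 0 ≤ T μ j :=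
  tsum_nonneg fun k => (P_pos hμ _).le

lemma F_le_one {μ : ℝ} (hμ : 0 < μ) (j : ℕ) : F μ j ≤ 1 := by
  have := T_nonneg hμ j
  rw [T_eq] at this
  linarith

/-- Explicit formula for the Stein–Chen solution. -/
theorem formula {μ : ℝ} (hμ : 0 < μ) (s j : ℕ) :
    steinChen μ s (j + 1) = P μ s * ((if s ≤ j then 1 else 0) - F μ j) / (μ * P μ j) := by
  have hμ' : μ ≠ 0 := hμ.ne'
  induction j with
  | zero =>
    have hP0 : P μ 0 ≠ 0 := (P_pos hμ 0).ne'
    have hF0 : F μ 0 = P μ 0 := by simp [F]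
    have hPs : Real.exp (-μ) * μ ^ s / (Nat.factorial s : ℝ) = P μ s := rfl
    rcases Nat.eq_zero_or_pos s with hs | hs
    · subst hs
      simp only [steinChen, hF0, hPs, Nat.cast_zero, zero_mul, zero_add,
        Nat.le_refl, if_true, if_pos rfl]
      field_simp
    · have h1 : ¬ s ≤ 0 := by omega
      have h2 : ¬ ((0 : ℕ) = s) := by omega
      simp only [steinChen, hF0, hPs, Nat.cast_zero, zero_mul, zero_add,
        if_neg h1, if_neg h2]
      field_simp
      ring
  | succ j ih =>
    have hPj : P μ j ≠ 0 := (P_pos hμ j).ne'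
    have hPj1 : P μ (j + 1) ≠ 0 := (P_pos hμ (j + 1)).ne'
    have hss : P μ (j + 1) = μ * P μ j / (j + 1) := P_succ j
    have hj1 : ((j : ℝ) + 1) ≠ 0 := by positivity
    have hPs : Real.exp (-μ) * μ ^ s / (Nat.factorial s : ℝ) = P μ s := rfl
    show ((((j : ℕ) + 1 : ℕ) : ℝ) * steinChen μ s (j + 1) + (if j + 1 = s then 1 else 0)
        - Real.exp (-μ) * μ ^ s / (Nat.factorial s : ℝ)) / μ = _
    rw [ih, hPs, F_succ, hss]
    push_cast
    rcases lt_trichotomy s (j + 1) with h | h | h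
    · have c1 : s ≤ j := by omega
      have c2 : s ≤ j + 1 := by omega
      have c3 : ¬ (j + 1 = s) := by omega
      rw [if_pos c1, if_pos c2, if_neg c3]
      field_simp
      ring
    · have c1 : ¬ s ≤ j := by omega
      have c2 : s ≤ j + 1 := by omega
      have c3 : j + 1 = s := by omega
      rw [if_neg c1, if_pos c2, if_pos c3]
      subst c3
      rw [hss]
      field_simp
      ring
    · have c1 : ¬ s ≤ j := by omega
      have c2 : ¬ s ≤ j + 1 := by omega
      have c3 : ¬ (j + 1 = s) := by omega
      rw [if_neg c1, if_neg c2, if_neg c3]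
      field_simp
      ring


/-- `X j = F j / P j` -/
def X (μ : ℝ) (j : ℕ) : ℝ := F μ j / P μ j

/-- `Y j = T j / P j` -/
def Y (μ : ℝ) (j : ℕ) : ℝ := T μ j / P μ j

lemma X_nonneg {μ : ℝ} (hμ : 0 < μ) (j : ℕ) : 0 ≤ X μ j :=
  div_nonneg (F_nonneg hμ j) (P_pos hμ j).le

lemma Y_nonneg {μ : ℝ} (hμ : 0 < μ) (j : ℕ) : 0 ≤ Y μ j :=
  div_nonneg (T_nonneg hμ j) (P_pos hμ j).le

lemma X_zero {μ : ℝ} (hμ : 0 < μ) : X μ 0 = 1 := by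
  unfold X
  rw [show F μ 0 = P μ 0 by simp [F]]
  exact div_self (P_pos hμ 0).ne'

lemma X_succ {μ : ℝ} (hμ : 0 < μ) (j : ℕ) :
    X μ (j + 1) = X μ j * (j + 1) / μ + 1 := by
  unfold X
  rw [F_succ, P_succ]
  have hPj : P μ j ≠ 0 := (P_pos hμ j).ne'
  have hj1 : ((j : ℝ) + 1) ≠ 0 := by positivity
  field_simp

lemma X_step {μ : ℝ} (hμ : 0 < μ) : ∀ j, X μ j ≤ X μ (j + 1) := by
  intro j
  induction j with
  | zero =>
    rw [X_zero hμ, X_succ hμ, X_zero hμ]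
    have : 0 ≤ 1 * ((0 : ℕ) + 1 : ℝ) / μ := by positivity
    push_cast at this ⊢
    linarith
  | succ j ih =>
    rw [X_succ hμ j, X_succ hμ (j + 1)]
    push_cast
    have h0 := X_nonneg hμ j
    have h1 : X μ j * ((j : ℝ) + 1) ≤ X μ (j + 1) * ((j : ℝ) + 1 + 1) := by nlinarith
    have h2 : X μ j * ((j : ℝ) + 1) / μ ≤ X μ (j + 1) * ((j : ℝ) + 1 + 1) / μ := by
      apply div_le_div_of_nonneg_right h1 hμ.le
    linarith

lemma X_mono {μ : ℝ} (hμ : 0 < μ) : Monotone (X μ) :=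
  monotone_nat_of_le_succ (X_step hμ)

lemma term_eq {μ : ℝ} (hμ : 0 < μ) (j k : ℕ) :
    P μ (k + (j + 1)) / P μ j
      = μ ^ (k + 1) * (Nat.factorial j : ℝ) / (Nat.factorial (k + j + 1) : ℝ) := by
  unfold P
  have h1 : k + (j + 1) = (k + 1) + j := by omega
  have h2 : k + j + 1 = (k + 1) + j := by omega
  rw [h1, h2, pow_add]
  have hPj : (Nat.factorial j : ℝ) ≠ 0 := by positivity
  have hPk : (Nat.factorial ((k + 1) + j) : ℝ) ≠ 0 := by positivity
  have he : Real.exp (-μ) ≠ 0 := Real.exp_ne_zero _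
  have hm : (μ : ℝ) ^ j ≠ 0 := by positivity
  field_simp

lemma summable_term {μ : ℝ} (hμ : 0 < μ) (j : ℕ) :
    Summable (fun k => μ ^ (k + 1) * (Nat.factorial j : ℝ) / (Nat.factorial (k + j + 1) : ℝ)) := by
  have h : Summable (fun k => P μ (k + (j + 1)) / P μ j) :=
    ((summable_nat_add_iff (j + 1)).2 (summable_P μ)).div_const _
  exact h.congr (term_eq hμ j)

lemma Y_eq {μ : ℝ} (hμ : 0 < μ) (j : ℕ) :
    Y μ j = ∑' k, μ ^ (k + 1) * (Nat.factorial j : ℝ) / (Nat.factorial (k + j + 1) : ℝ) := by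
  unfold Y T
  rw [← tsum_div_const]
  exact tsum_congr (term_eq hμ j)

lemma Y_anti {μ : ℝ} (hμ : 0 < μ) : Antitone (Y μ) := by
  apply antitone_nat_of_succ_le
  intro j
  rw [Y_eq hμ j, Y_eq hμ (j + 1)]
  refine Summable.tsum_le_tsum (fun k => ?_) (summable_term hμ (j + 1)) (summable_term hμ j)
  have hnat : (Nat.factorial (j + 1) : ℝ) * (Nat.factorial (k + j + 1) : ℝ)
      ≤ (Nat.factorial j : ℝ) * (Nat.factorial (k + (j + 1) + 1) : ℝ) := by
    have h1 : Nat.factorial (j + 1) * Nat.factorial (k + j + 1)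
        ≤ Nat.factorial j * Nat.factorial (k + (j + 1) + 1) := by
      rw [Nat.factorial_succ, show k + (j + 1) + 1 = (k + j + 1) + 1 by omega,
        Nat.factorial_succ (k + j + 1)]
      have : j + 1 ≤ k + j + 1 + 1 := by omega
      calc (j + 1) * Nat.factorial j * Nat.factorial (k + j + 1)
          ≤ (k + j + 1 + 1) * Nat.factorial j * Nat.factorial (k + j + 1) := by
            exact Nat.mul_le_mul_right _ (Nat.mul_le_mul_right _ this)
        _ = Nat.factorial j * ((k + j + 1 + 1) * Nat.factorial (k + j + 1)) := by ring
    exact_mod_cast by exact_mod_cast h1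
  rw [div_le_div_iff₀ (by positivity) (by positivity)]
  have hpow : (0 : ℝ) ≤ μ ^ (k + 1) := by positivity
  calc μ ^ (k + 1) * (Nat.factorial (j + 1) : ℝ) * (Nat.factorial (k + j + 1) : ℝ)
      = μ ^ (k + 1) * ((Nat.factorial (j + 1) : ℝ) * (Nat.factorial (k + j + 1) : ℝ)) := by ring
    _ ≤ μ ^ (k + 1) * ((Nat.factorial j : ℝ) * (Nat.factorial (k + (j + 1) + 1) : ℝ)) :=
        mul_le_mul_of_nonneg_left hnat hpow
    _ = μ ^ (k + 1) * (Nat.factorial j : ℝ) * (Nat.factorial (k + (j + 1) + 1) : ℝ) := by ring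


lemma g_neg_form {μ : ℝ} (hμ : 0 < μ) {s j : ℕ} (h : ¬ s ≤ j) :
    steinChen μ s (j + 1) = -(P μ s / μ * X μ j) := by
  rw [formula hμ, if_neg h]
  unfold X
  have hPj : P μ j ≠ 0 := (P_pos hμ j).ne'
  field_simp
  ring

lemma g_pos_form {μ : ℝ} (hμ : 0 < μ) {s j : ℕ} (h : s ≤ j) :
    steinChen μ s (j + 1) = P μ s / μ * Y μ j := by
  rw [formula hμ, if_pos h]
  unfold Y
  rw [T_eq]
  have hPj : P μ j ≠ 0 := (P_pos hμ j).ne'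
  field_simp

lemma P_le_geo {μ : ℝ} (hμ : 0 < μ) (s : ℕ) (hs : (s : ℝ) < μ) :
    ∀ k i, i + k = s → P μ i ≤ P μ s * ((s : ℝ) / μ) ^ k := by
  intro k
  induction k with
  | zero => intro i hi; simp [show i = s by omega]
  | succ k ih =>
    intro i hi
    have h1 : (i + 1) + k = s := by omega
    have ih' := ih (i + 1) h1
    have h2 : P μ i = ((i : ℝ) + 1) * P μ (i + 1) / μ := by
      rw [P_succ]
      field_simp
    have hi1 : ((i : ℝ) + 1) ≤ (s : ℝ) := by
      have : i + 1 ≤ s := by omega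
      exact_mod_cast this
    have hP1 : 0 ≤ P μ (i + 1) := (P_pos hμ (i + 1)).le
    have hPs : 0 ≤ P μ s := (P_pos hμ s).le
    calc P μ i = ((i : ℝ) + 1) * P μ (i + 1) / μ := h2
      _ ≤ (s : ℝ) * P μ (i + 1) / μ := by
          apply div_le_div_of_nonneg_right _ hμ.le
          exact mul_le_mul_of_nonneg_right hi1 hP1
      _ = ((s : ℝ) / μ) * P μ (i + 1) := by ring
      _ ≤ ((s : ℝ) / μ) * (P μ s * ((s : ℝ) / μ) ^ k) := by
          apply mul_le_mul_of_nonneg_left ih' (by positivity)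
      _ = P μ s * ((s : ℝ) / μ) ^ (k + 1) := by ring

lemma F_bound {μ : ℝ} (hμ : 0 < μ) (t : ℕ) (hlt : ((t : ℝ) + 1) < μ) :
    F μ t * (μ - ((t : ℝ) + 1)) ≤ P μ (t + 1) * ((t : ℝ) + 1) := by
  set s : ℕ := t + 1 with hsdef
  have hsc : ((s : ℕ) : ℝ) = (t : ℝ) + 1 := by rw [hsdef, Nat.cast_succ]
  have hq0 : (0 : ℝ) ≤ (s : ℝ) / μ := by positivity
  have hq1 : (s : ℝ) / μ < 1 := by
    rw [div_lt_one hμ]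
    rw [hsc]; exact hlt
  set q : ℝ := (s : ℝ) / μ with hqdef
  have hFt : F μ t ≤ P μ s * (q * (1 / (1 - q))) := by
    have hterm : ∀ i ∈ Finset.range s, P μ i ≤ P μ s * q ^ (s - i) := by
      intro i hi
      rw [Finset.mem_range] at hi
      exact P_le_geo hμ s (hsc ▸ hlt) (s - i) i (by omega)
    have h1 : F μ t ≤ ∑ i ∈ Finset.range s, P μ s * q ^ (s - i) := by
      unfold F
      exact Finset.sum_le_sum hterm
    have h2 : ∑ i ∈ Finset.range s, P μ s * q ^ (s - i)
        = P μ s * ∑ i ∈ Finset.range s, q ^ (s - i) := by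
      rw [Finset.mul_sum]
    have h3 : ∑ i ∈ Finset.range s, q ^ (s - i) = ∑ i ∈ Finset.range s, q ^ (i + 1) := by
      rw [← Finset.sum_range_reflect]
      apply Finset.sum_congr rfl
      intro i hi
      rw [Finset.mem_range] at hi
      congr 1
      omega
    have h4 : ∑ i ∈ Finset.range s, q ^ (i + 1) = q * ∑ i ∈ Finset.range s, q ^ i := by
      rw [Finset.mul_sum]
      apply Finset.sum_congr rfl
      intro i _
      ring
    have h5 : ∑ i ∈ Finset.range s, q ^ i ≤ 1 / (1 - q) := by
      rw [geom_sum_eq hq1.ne s]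
      have he : (q ^ s - 1) / (q - 1) = (1 - q ^ s) / (1 - q) := by
        rw [div_eq_div_iff (by linarith) (by linarith)]
        ring
      rw [he]
      apply div_le_div_of_nonneg_right _ (by linarith : (0:ℝ) ≤ 1 - q)
      have : 0 ≤ q ^ s := pow_nonneg hq0 s
      linarith
    calc F μ t ≤ P μ s * ∑ i ∈ Finset.range s, q ^ (s - i) := by rw [← h2]; exact h1
      _ = P μ s * (q * ∑ i ∈ Finset.range s, q ^ i) := by rw [h3, h4]
      _ ≤ P μ s * (q * (1 / (1 - q))) := by
          apply mul_le_mul_of_nonneg_left _ (P_pos hμ s).le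
          exact mul_le_mul_of_nonneg_left h5 hq0
  have hqval : q * (1 / (1 - q)) = ((s : ℝ)) / (μ - (s : ℝ)) := by
    rw [hqdef]
    have hms : μ - (s : ℝ) ≠ 0 := by rw [hsc]; linarith
    have h1q : (1 : ℝ) - (s : ℝ) / μ = (μ - (s : ℝ)) / μ := by field_simp
    rw [h1q]
    field_simp
  rw [hqval] at hFt
  have hms : (0 : ℝ) < μ - (s : ℝ) := by rw [hsc]; linarith
  have h6 := mul_le_mul_of_nonneg_right hFt hms.le
  have h7 : P μ s * ((s : ℝ) / (μ - (s : ℝ))) * (μ - (s : ℝ)) = P μ s * (s : ℝ) := by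
    field_simp
  rw [h7] at h6
  calc F μ t * (μ - ((t : ℝ) + 1)) = F μ t * (μ - (s : ℝ)) := by rw [hsc]
    _ ≤ P μ s * (s : ℝ) := h6
    _ = P μ (t + 1) * ((t : ℝ) + 1) := by rw [hsc]

lemma jump {μ : ℝ} (hμ : 0 < μ) (s : ℕ) :
    steinChen μ s (s + 1) - steinChen μ s s ≤ 1 / μ := by
  have hPs : (0 : ℝ) < P μ s := P_pos hμ s
  have hg1 : steinChen μ s (s + 1) = (1 - F μ s) / μ := by
    rw [g_pos_form hμ (le_refl s)]
    unfold Y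
    rw [T_eq]
    field_simp
  cases s with
  | zero =>
    have h0 : steinChen μ 0 0 = 0 := rfl
    rw [hg1, h0]
    have hF := F_nonneg hμ 0
    have h2 : (1 - F μ 0) / μ ≤ 1 / μ := by
      apply div_le_div_of_nonneg_right _ hμ.le
      linarith
    linarith
  | succ t =>
    have hPt : (0 : ℝ) < P μ t := P_pos hμ t
    have hgs : steinChen μ (t + 1) (t + 1) = -(P μ (t + 1) / μ * (F μ t / P μ t)) := by
      rw [g_neg_form hμ (by omega : ¬ t + 1 ≤ t)]
      rfl
    rw [hg1, hgs]
    have hFs : F μ (t + 1) = F μ t + P μ (t + 1) := F_succ t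
    have hPsucc : P μ (t + 1) = μ * P μ t / ((t : ℝ) + 1) := by
      rw [P_succ]
    -- goal: (1 - F μ (t+1))/μ + P μ (t+1)/μ * (F μ t / P μ t) ≤ 1/μ
    -- suffices: P μ (t+1) * F μ t / P μ t ≤ F μ (t+1)
    have key : P μ (t + 1) * F μ t / P μ t ≤ F μ (t + 1) := by
      have ht1 : (0 : ℝ) < (t : ℝ) + 1 := by positivity
      have hLHS : P μ (t + 1) * F μ t / P μ t = μ * F μ t / ((t : ℝ) + 1) := by
        rw [hPsucc]
        field_simp
      rw [hFs, hLHS]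
      rcases le_or_gt μ ((t : ℝ) + 1) with hc | hc
      · have h1 : μ * F μ t / ((t : ℝ) + 1) ≤ F μ t := by
          rw [div_le_iff₀ ht1]
          nlinarith [F_nonneg hμ t]
        have := (P_pos hμ (t + 1)).le
        linarith
      · have hb := F_bound hμ t hc
        rw [div_le_iff₀ ht1]
        nlinarith [F_nonneg hμ t, (P_pos hμ (t + 1)).le]
    have hFt0 := F_nonneg hμ t
    have expand : -(P μ (t + 1) / μ * (F μ t / P μ t)) = -(P μ (t + 1) * F μ t / P μ t) / μ := by
      ring
    rw [expand]
    have h3 : (1 - F μ (t + 1)) / μ - (-(P μ (t + 1) * F μ t / P μ t) / μ)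
        = (1 - F μ (t + 1) + P μ (t + 1) * F μ t / P μ t) / μ := by ring
    rw [h3]
    apply div_le_div_of_nonneg_right _ hμ.le
    linarith

lemma sum_range_bound {μ : ℝ} (hμ : 0 < μ) (s n : ℕ) :
    ∑ j ∈ Finset.range n, |steinChen μ s (j + 1) - steinChen μ s j| ≤ 2 / μ := by
  set g := steinChen μ s with hg
  have hg0 : g 0 = 0 := rfl
  have hc : (0 : ℝ) ≤ P μ s / μ := div_nonneg (P_pos hμ s).le hμ.le
  have hnonpos : ∀ j, j ≤ s → g j ≤ 0 := by
    intro j hj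
    cases j with
    | zero => rw [hg0]
    | succ i =>
      rw [hg, g_neg_form hμ (by omega : ¬ s ≤ i)]
      have := X_nonneg hμ i
      nlinarith
  have hnonneg : ∀ j, s < j → 0 ≤ g j := by
    intro j hj
    cases j with
    | zero => omega
    | succ i =>
      rw [hg, g_pos_form hμ (by omega : s ≤ i)]
      exact mul_nonneg hc (Y_nonneg hμ i)
  have hstep : ∀ j, j ≠ s → g (j + 1) ≤ g j := by
    intro j hj
    rcases lt_or_gt_of_ne hj with h | h
    · cases j with
      | zero =>
        have := hnonpos 1 (by omega)
        rw [hg0]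
        exact this
      | succ i =>
        rw [hg, g_neg_form hμ (by omega : ¬ s ≤ i + 1), g_neg_form hμ (by omega : ¬ s ≤ i)]
        have := X_mono hμ (Nat.le_succ i)
        nlinarith
    · cases j with
      | zero => omega
      | succ i =>
        rw [hg, g_pos_form hμ (by omega : s ≤ i + 1), g_pos_form hμ (by omega : s ≤ i)]
        have := Y_anti hμ (Nat.le_succ i)
        nlinarith
  have habs : ∀ j, |g (j + 1) - g j|
      = (g j - g (j + 1)) + (if j = s then 2 * (g (s + 1) - g s) else 0) := by
    intro j
    by_cases hj : j = s
    · subst hj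
      have h1 : g j ≤ 0 := hnonpos j le_rfl
      have h2 : 0 ≤ g (j + 1) := hnonneg (j + 1) (by omega)
      rw [if_pos rfl, abs_of_nonneg (by linarith)]
      ring
    · rw [if_neg hj, abs_of_nonpos (by linarith [hstep j hj]), add_zero]
      ring
  have hjump : g (s + 1) - g s ≤ 1 / μ := jump hμ s
  calc ∑ j ∈ Finset.range n, |g (j + 1) - g j|
      = ∑ j ∈ Finset.range n,
          ((g j - g (j + 1)) + (if j = s then 2 * (g (s + 1) - g s) else 0)) :=
        Finset.sum_congr rfl fun j _ => habs j
    _ = (g 0 - g n) + (if s ∈ Finset.range n then 2 * (g (s + 1) - g s) else 0) := by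
        rw [Finset.sum_add_distrib, Finset.sum_range_sub' g n,
          Finset.sum_ite_eq' (Finset.range n) s]
    _ ≤ 2 / μ := by
        rw [hg0]
        by_cases hn : s < n
        · rw [if_pos (Finset.mem_range.2 hn)]
          have hgn : 0 ≤ g n := hnonneg n hn
          have h2 : (1 : ℝ) / μ + 1 / μ = 2 / μ := by ring
          linarith
        · rw [if_neg (fun h => hn (Finset.mem_range.1 h)), add_zero]
          have h0 : (0 : ℝ) ≤ 1 / μ := by positivity
          have h2 : (1 : ℝ) / μ ≤ 2 / μ := by
            apply div_le_div_of_nonneg_right _ hμ.le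
            norm_num
          have hub : -g n ≤ 1 / μ := by
            cases n with
            | zero => rw [hg0]; simpa using h0
            | succ i =>
              obtain ⟨t, rfl⟩ : ∃ t, s = t + 1 := ⟨s - 1, by omega⟩
              have e1 : g (i + 1) = -(P μ (t + 1) / μ * X μ i) := g_neg_form hμ (by omega)
              have e2 : g (t + 1) = -(P μ (t + 1) / μ * X μ t) := g_neg_form hμ (by omega)
              have hx := X_mono hμ (by omega : i ≤ t)
              have hgs1 : 0 ≤ g (t + 1 + 1) := hnonneg _ (by omega)
              have h5 : -g (i + 1) ≤ -g (t + 1) := by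
                rw [e1, e2]
                nlinarith
              linarith
          linarith

end SteinAux

/-- `Σ_l |ĝ_{μ,r}(l) − ĝ_{μ,r}(l−1)| ≤ 2/μ`. -/
theorem ghat_first_difference_l1 (μ : ℝ) (hμ : 0 < μ) (r : ℤ) (hr : 0 ≤ r + ⌊μ⌋) :
    Summable (fun l : ℤ => |ghat μ r l - ghat μ r (l - 1)|) ∧
    (∑' l : ℤ, |ghat μ r l - ghat μ r (l - 1)|) ≤ 2 / μ := by
  classical
  have hm0 : 0 ≤ ⌊μ⌋ := Int.floor_nonneg.mpr hμ.le
  set s : ℕ := (r + ⌊μ⌋).toNat with hs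
  set f : ℤ → ℝ := fun l => |ghat μ r l - ghat μ r (l - 1)| with hf
  set e : ℕ → ℤ := fun j => (j : ℤ) + 1 - ⌊μ⌋ with he
  have hinj : Function.Injective e := by
    intro a b hab
    simp only [he] at hab
    omega
  have hzero : ∀ l, l ∉ Set.range e → f l = 0 := by
    intro l hl
    have hlm : l ≤ -⌊μ⌋ := by
      by_contra h
      push_neg at h
      refine hl ⟨(l - 1 + ⌊μ⌋).toNat, ?_⟩
      simp only [he]
      omega
    have h1 : ghat μ r l = 0 := by
      unfold ghat
      rcases lt_or_eq_of_le hlm with h | h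
      · rw [if_pos (by omega)]
      · rw [if_neg (by omega), show (l + ⌊μ⌋).toNat = 0 by omega]
        rfl
    have h2 : ghat μ r (l - 1) = 0 := by
      unfold ghat
      rw [if_pos (by omega)]
    simp [hf, h1, h2]
  have hcomp : ∀ j : ℕ, f (e j) = |steinChen μ s (j + 1) - steinChen μ s j| := by
    intro j
    have h1 : ghat μ r (e j) = steinChen μ s (j + 1) := by
      unfold ghat
      rw [if_neg (by simp only [he]; omega), ← hs]
      congr 1
      simp only [he]
      omega
    have h2 : ghat μ r (e j - 1) = steinChen μ s j := by
      unfold ghat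
      rw [if_neg (by simp only [he]; omega), ← hs]
      congr 1
      simp only [he]
      omega
    simp only [hf, h1, h2]
  have hsum : Summable (fun j : ℕ => |steinChen μ s (j + 1) - steinChen μ s j|) :=
    summable_of_sum_range_le (fun j => abs_nonneg _) (fun n => SteinAux.sum_range_bound hμ s n)
  have hsumf : Summable f := by
    rw [← Function.Injective.summable_iff hinj hzero]
    exact hsum.congr fun j => (hcomp j).symm
  have hsupp : Function.support f ⊆ Set.range e := by
    intro l hls
    by_contra h
    exact hls (hzero l h)
  refine ⟨hsumf, ?_⟩
  have ht : ∑' l, f l = ∑' j, f (e j) := (Function.Injective.tsum_eq hinj hsupp).symm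
  rw [ht, tsum_congr hcomp]
  exact Real.tsum_le_of_sum_range_le (fun j => abs_nonneg _) (fun n => SteinAux.sum_range_bound hμ s n)
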